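/- Agreement sampling completeness: Let u, v be vertices with |N(u) △ N(v)| < 0.8·β·max(d(u),d(v)) (0.8-weak agreement). With the same sampling (each vertex independently with probability p = min(a·log n/(β·j),1), j ≤ max(d(u),d(v))), and X = |S ∩ (N(u) △ N(v))|, we have E[X] ≤ 0.8τ with τ = (a log n/j)·max(d(u),d(v)), and by the Chernoff upper-tail bound Pr[X > 0.9τ] ≤ exp(-(1/64)·(a log n)/3) ≤ n^{-3} for a ≥ 600. -/

import Mathlib

set_option maxHeartbeats 1000000

open Finset MeasureTheory

lemma pi_eval_measure {ι : Type*} [Fintype ι] [DecidableEq ι] {α : ι → Type*}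
    [∀ i, MeasurableSpace (α i)] (ν : ∀ i, Measure (α i)) [∀ i, IsProbabilityMeasure (ν i)]
    (i : ι) (t : Set (α i)) (ht : MeasurableSet t) :
    Measure.pi ν (Function.eval i ⁻¹' t) = ν i t := by
  rw [Set.eval_preimage, Measure.pi_pi]
  rw [Finset.prod_eq_single i (fun j _ hj => by simp [Function.update_of_ne hj])
    (fun h => absurd (Finset.mem_univ i) h)]
  simp

lemma iIndepFun_eval {ι : Type*} [Fintype ι] [DecidableEq ι] {α : ι → Type*}
    [∀ i, MeasurableSpace (α i)] (ν : ∀ i, Measure (α i)) [∀ i, IsProbabilityMeasure (ν i)] :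
    ProbabilityTheory.iIndepFun
      (fun i (ω : ∀ j, α j) => ω i) (Measure.pi ν) := by
  rw [ProbabilityTheory.iIndepFun_iff]
  intro s f' hf'
  classical
  choose! B hB1 hB2 using hf'
  set C : ∀ i, Set (α i) := fun i => if h : i ∈ s then B i else Set.univ with hC
  have hinter : (⋂ i ∈ s, f' i) = Set.univ.pi C := by
    ext ω
    simp only [Set.mem_iInter, Set.mem_pi, Set.mem_univ, forall_true_left, hC]
    constructor
    · intro h i
      by_cases hi : i ∈ s
      · simp only [dif_pos hi]
        have := h i hi
        rw [← hB2 i hi] at this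
        exact this
      · simp [dif_neg hi]
    · intro h i hi
      have := h i
      rw [dif_pos hi] at this
      rw [← hB2 i hi]
      exact this
  rw [hinter, Measure.pi_pi]
  rw [← Finset.prod_subset (Finset.subset_univ s)
    (fun i _ hi => by simp [hC, hi])]
  refine Finset.prod_congr rfl fun i hi => ?_
  rw [← hB2 i hi]
  rw [show (fun ω : ∀ j, α j => ω i) ⁻¹' B i = Function.eval i ⁻¹' B i from rfl,
    pi_eval_measure ν i (B i) (hB1 i hi), hC]
  simp [hi]

theorem stmt17 {V : Type*} [Fintype V] [DecidableEq V]
    (A B : Finset V) (β j a : ℝ)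
    (hβ0 : 0 < β) (hj0 : 0 < j)
    (hn : 2 ≤ Fintype.card V)
    (hjle : j ≤ max (A.card : ℝ) (B.card : ℝ))
    (ha : 600 ≤ a)
    (hagree : ((symmDiff A B).card : ℝ)
      < 0.8 * β * max (A.card : ℝ) (B.card : ℝ))
    (p : ℝ) (hp : p = min (a * Real.log (Fintype.card V) / (β * j)) 1)
    (hp1 : ENNReal.ofReal p ≤ 1)
    (τ : ℝ)
    (hτ : τ = a * Real.log (Fintype.card V) / j * max (A.card : ℝ) (B.card : ℝ))
    (μ : Measure (V → Bool))
    (hμ : μ = Measure.pi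
      (fun _ : V => (PMF.bernoulli (Real.toNNReal p) (ENNReal.coe_le_one_iff.mp hp1)).toMeasure))
    (X : (V → Bool) → ℝ)
    (hX : X = fun ω => (((symmDiff A B).filter (fun v => ω v = true)).card : ℝ)) :
    (∫ ω, X ω ∂μ) ≤ 0.8 * τ
    ∧ μ {ω | X ω > 0.9 * τ}
        ≤ ENNReal.ofReal
            (Real.exp (-(1 / 64) * (a * Real.log (Fintype.card V)) / 3))
    ∧ Real.exp (-(1 / 64) * (a * Real.log (Fintype.card V)) / 3)
        ≤ (Fintype.card V : ℝ) ^ (-3 : ℝ) := by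
  classical
  have hμprob : IsProbabilityMeasure μ := by rw [hμ]; infer_instance
  set n := Fintype.card V with hn'
  set L := Real.log n with hL'
  have hn1 : (1:ℝ) < (n:ℝ) := by exact_mod_cast lt_of_lt_of_le one_lt_two hn
  have hL : 0 < L := Real.log_pos hn1
  have ha0 : (0:ℝ) < a := lt_of_lt_of_le (by norm_num) ha
  have hM : 0 < max (A.card:ℝ) (B.card:ℝ) := lt_of_lt_of_le hj0 hjle
  have hx0 : 0 ≤ a * L / (β * j) := by positivity
  have hp0 : 0 ≤ p := hp ▸ le_min hx0 zero_le_one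
  have hple : p ≤ a * L / (β * j) := hp ▸ min_le_left _ _
  set s := symmDiff A B with hs
  set N : ℝ := (s.card : ℝ) with hN
  have hτ0 : 0 < τ := by rw [hτ]; positivity
  have hτaL : a * L ≤ τ := by
    rw [hτ]
    calc a * L = a * L / j * j := by field_simp
    _ ≤ a * L / j * max (A.card:ℝ) (B.card:ℝ) :=
        mul_le_mul_of_nonneg_left hjle (by positivity)
  have hkey : p * N ≤ 0.8 * τ := by
    calc p * N ≤ (a * L / (β * j)) * (0.8 * β * max (A.card:ℝ) (B.card:ℝ)) :=
      mul_le_mul hple hagree.le (Nat.cast_nonneg _) hx0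
    _ = 0.8 * τ := by rw [hτ]; field_simp
  set Y : V → (V → Bool) → ℝ := fun i ω => if ω i = true then 1 else 0 with hY
  have hXsum : X = ∑ i ∈ s, Y i := by
    funext ω
    rw [hX]
    simp only [Finset.sum_apply, hY, Finset.card_filter]
    push_cast [apply_ite (fun x : ℕ => (x:ℝ))]
    rfl
  have hint : ∀ (f : (V→Bool) → ℝ), Integrable f μ := fun f => Integrable.of_finite
  have hEY : ∀ i : V, ∫ ω, Y i ω ∂μ = p := by
    intro i
    have hind : Y i = Set.indicator (Function.eval i ⁻¹' ({true} : Set Bool))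
        (1 : (V→Bool) → ℝ) := by
      funext ω
      simp [hY, Set.indicator_apply, Function.eval]
    rw [hind, integral_indicator_one ((Set.to_countable _).measurableSet)]
    rw [hμ, measureReal_def, pi_eval_measure _ i _ ((Set.to_countable _).measurableSet)]
    rw [PMF.toMeasure_apply_singleton _ _ ((Set.to_countable _).measurableSet)]
    simp [PMF.bernoulli_apply, ENNReal.toReal_ofReal hp0, Real.coe_toNNReal _ hp0]
  have hEX : ∫ ω, X ω ∂μ = N * p := by
    rw [hXsum]
    simp only [Finset.sum_apply]
    rw [integral_finset_sum s (fun i _ => hint _)]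
    simp [hEY, hN, mul_comm]
  refine ⟨by rw [hEX]; linarith [hkey], ?_, ?_⟩
  · -- Chernoff
    have hmeas : ∀ i, Measurable (Y i) := fun i => measurable_of_countable _
    have hcomp : ProbabilityTheory.iIndepFun Y μ := by
      rw [hμ]
      exact (iIndepFun_eval
        (fun _ : V => (PMF.bernoulli (Real.toNNReal p) (ENNReal.coe_le_one_iff.mp hp1)).toMeasure)).comp
        (fun i (b : Bool) => if b = true then (1:ℝ) else 0)
        (fun i => measurable_of_countable _)
    set E := Real.exp (1/8) with hE
    have hE1 : 1 ≤ E := Real.one_le_exp (by norm_num)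
    have hmgfY : ∀ i : V, ProbabilityTheory.mgf (Y i) μ (1/8) = 1 + (E - 1) * p := by
      intro i
      rw [ProbabilityTheory.mgf]
      have heq : (fun ω => Real.exp (1/8 * Y i ω))
          = fun ω => 1 + (E - 1) * Y i ω := by
        funext ω
        by_cases h : ω i = true <;> simp [hY, h, hE] <;> ring
      rw [heq, integral_add (integrable_const _) (hint _), integral_const,
        integral_const_mul, hEY i]
      simp
    have hmgfX : ProbabilityTheory.mgf X μ (1/8) = (1 + (E - 1) * p) ^ s.card := by
      rw [hXsum, ProbabilityTheory.iIndepFun.mgf_sum hcomp hmeas s]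
      rw [Finset.prod_congr rfl (fun i _ => hmgfY i), Finset.prod_const]
    have hch := ProbabilityTheory.measure_ge_le_exp_mul_mgf (μ := μ) (X := X)
      (t := 1/8) (0.9 * τ) (by norm_num) (hint _)
    have hKnum : E ≤ 1.13371 := by
      have h1 : Real.exp (1/128) ≤ 128/127 := by
        have h2 := Real.add_one_le_exp (-(1/128) : ℝ)
        rw [Real.exp_neg] at h2
        have hpos : 0 < Real.exp ((1:ℝ)/128) := Real.exp_pos _
        nlinarith [mul_nonneg (sub_nonneg.mpr h2) hpos.le,
          mul_inv_cancel₀ (ne_of_gt hpos)]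
      have : E = Real.exp (1/128) ^ 16 := by
        rw [hE, ← Real.exp_nat_mul]; norm_num
      rw [this]
      calc Real.exp (1/128) ^ 16 ≤ (128/127:ℝ)^16 :=
        pow_le_pow_left₀ (Real.exp_pos _).le h1 16
      _ ≤ 1.13371 := by norm_num
    have hmgfbound : (1 + (E - 1) * p) ^ s.card ≤ Real.exp ((E - 1) * (0.8 * τ)) := by
      calc (1 + (E - 1) * p) ^ s.card ≤ Real.exp ((E - 1) * p) ^ s.card := by
            apply pow_le_pow_left₀ (by nlinarith)
            linarith [Real.add_one_le_exp ((E - 1) * p)]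
      _ = Real.exp ((s.card : ℝ) * ((E - 1) * p)) := by rw [← Real.exp_nat_mul]
      _ ≤ Real.exp ((E - 1) * (0.8 * τ)) := by
            apply Real.exp_le_exp.mpr
            have : (s.card : ℝ) * ((E - 1) * p) = (E - 1) * (p * N) := by rw [hN]; ring
            rw [this]
            exact mul_le_mul_of_nonneg_left hkey (by linarith)
    have hexpbound : Real.exp (-(1/8) * (0.9 * τ)) * ProbabilityTheory.mgf X μ (1/8)
        ≤ Real.exp (-(1 / 64) * (a * L) / 3) := by
      rw [hmgfX]
      calc Real.exp (-(1/8) * (0.9 * τ)) * (1 + (E - 1) * p) ^ s.card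
          ≤ Real.exp (-(1/8) * (0.9 * τ)) * Real.exp ((E - 1) * (0.8 * τ)) :=
            mul_le_mul_of_nonneg_left hmgfbound (Real.exp_pos _).le
      _ = Real.exp (-(1/8) * (0.9 * τ) + (E - 1) * (0.8 * τ)) := by
            rw [← Real.exp_add]
      _ ≤ Real.exp (-(1 / 64) * (a * L) / 3) := by
            apply Real.exp_le_exp.mpr
            nlinarith [hτ0, hτaL, hKnum, mul_le_mul_of_nonneg_right hKnum hτ0.le]
    calc μ {ω | X ω > 0.9 * τ} ≤ μ {ω | 0.9 * τ ≤ X ω} :=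
          measure_mono (Set.setOf_subset_setOf.mpr (fun ω h => le_of_lt h))
    _ = ENNReal.ofReal ((μ {ω | 0.9 * τ ≤ X ω}).toReal) :=
          (ENNReal.ofReal_toReal (measure_ne_top _ _)).symm
    _ ≤ ENNReal.ofReal (Real.exp (-(1 / 64) * (a * L) / 3)) :=
          ENNReal.ofReal_le_ofReal (le_trans hch hexpbound)
  · rw [Real.rpow_def_of_pos (by positivity : (0:ℝ) < (n:ℝ))]
    apply Real.exp_le_exp.mpr
    rw [← hL']
    nlinarith [mul_nonneg (show (0:ℝ) ≤ a - 576 by linarith) hL.le]
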